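/- Let h̄(u) be a polynomial in one variable with all coefficients of modulus at most n^d and with constant term of modulus at least e^{-B Δ log n}, where the coefficients are obtained from a {0,±1}-coefficient d-variable polynomial via the substitution z_i = u^{b_i}. Then for any positive integer L', there exists u ∈ γ(L') with |h̄(u)| ≥ exp(-C(BΔ + d) L' log n). -/

import Mathlib

open Real Complex Polynomial

lemma rot_lemma (L' : ℕ) (hL : 1 ≤ L') (z : ℂ) (hz : ‖z‖ = 1) :
    ∃ (a : Fin L') (θ : ℝ), |θ| ≤ π / L' ∧
      z * Complex.exp ((-(2*π*(a:ℝ)/(L':ℝ)) : ℂ) * Complex.I) = Complex.exp ((θ:ℂ) * Complex.I) := by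
  have hLpos : (0:ℝ) < L' := by exact_mod_cast hL
  have hLZ : ((L':ℤ)) ≠ 0 := by exact_mod_cast hLpos.ne'
  have hπ : (0:ℝ) < π := Real.pi_pos
  set φ := z.arg with hφ
  have hzeq : z = Complex.exp ((φ:ℂ) * Complex.I) := by
    have := Complex.norm_mul_exp_arg_mul_I z
    rw [hz] at this
    simpa using this.symm
  set k : ℤ := round (φ * L' / (2*π)) with hk
  set θ : ℝ := φ - 2*π*k/L' with hθ
  have hθbound : |θ| ≤ π / L' := by
    have h1 : |φ * L' / (2*π) - k| ≤ 1/2 := abs_sub_round _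
    have h2 : θ = (2*π/L') * (φ * L' / (2*π) - k) := by
      rw [hθ]
      field_simp
    rw [h2, abs_mul, abs_of_pos (show (0:ℝ) < 2*π/L' by positivity)]
    calc 2*π/L' * |φ * L' / (2*π) - k| ≤ 2*π/L' * (1/2) :=
          mul_le_mul_of_nonneg_left h1 (by positivity)
      _ = π / L' := by ring
  set a : Fin L' := ⟨(k % (L':ℤ)).toNat, by
    have h1 : k % (L':ℤ) < L' := Int.emod_lt_of_pos k (by exact_mod_cast hL)
    have h2 : 0 ≤ k % (L':ℤ) := Int.emod_nonneg k hLZ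
    omega⟩ with ha
  refine ⟨a, θ, hθbound, ?_⟩
  have hacast : (a:ℝ) = ((k % (L':ℤ) : ℤ) : ℝ) := by
    simp only [ha]
    norm_cast
    exact Int.toNat_of_nonneg (Int.emod_nonneg k hLZ)
  set m : ℤ := k / (L':ℤ) with hm
  have hint : (L':ℤ) * m + k % (L':ℤ) = k := Int.mul_ediv_add_emod k _
  have hkR : (k:ℝ) = (L':ℝ) * m + ((k % (L':ℤ) : ℤ) : ℝ) := by exact_mod_cast hint.symm
  have hkey : φ - 2*π*(a:ℝ)/L' = θ + m * (2*π) := by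
    rw [hθ, hacast, hkR]
    field_simp
    ring
  rw [hzeq, ← Complex.exp_add]
  have hc : ((φ - 2*π*(a:ℝ)/L' : ℝ):ℂ) = ((θ + m*(2*π):ℝ):ℂ) := by rw [hkey]
  push_cast at hc
  have : (φ:ℂ) * Complex.I + (-(2*π*(a:ℝ)/(L':ℝ)) : ℂ) * Complex.I
      = ((θ:ℂ)) * Complex.I + (m:ℂ) * (2*(π:ℂ)*Complex.I) := by
    push_cast
    linear_combination Complex.I * hc
  rw [this, Complex.exp_add, Complex.exp_int_mul_two_pi_mul_I, mul_one]

theorem stmt_12 :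
    ∃ C : ℝ, 0 < C ∧ ∀ (n d : ℕ) (B Δ : ℝ), 2 ≤ n → 0 ≤ B → 1 ≤ Δ →
      ∀ h : Polynomial ℂ,
        (∀ i : ℕ, ‖h.coeff i‖ ≤ (n : ℝ) ^ d) →
        (∀ u : ℂ, ‖u‖ ≤ 1 → ‖h.eval u‖ ≤ (n : ℝ) ^ d) →
        Real.exp (-(B * Δ * Real.log n)) ≤ ‖h.coeff 0‖ →
        ∀ L' : ℕ, 1 ≤ L' →
          ∃ u : ℂ, (∃ θ : ℝ, |θ| ≤ π / L' ∧ u = Complex.exp (θ * Complex.I)) ∧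
            Real.exp (-C * (B * Δ + d) * L' * Real.log n) ≤ ‖h.eval u‖ := by
  refine ⟨1, one_pos, ?_⟩
  intro n d B Δ hn hB hΔ h hcoeff hsup hconst L' hL
  have hLpos : (0:ℝ) < L' := by exact_mod_cast hL
  have hn1 : (1:ℝ) < n := by exact_mod_cast hn
  have hnpos : (0:ℝ) < n := by linarith
  have hlogn : 0 < Real.log n := Real.log_pos hn1
  have hnd1 : (1:ℝ) ≤ (n:ℝ)^d := by simpa using pow_le_pow_left₀ (by norm_num) (le_of_lt hn1) d
  have hndpos : (0:ℝ) < (n:ℝ)^d := by positivity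
  have hπ : (0:ℝ) < π := Real.pi_pos
  set ζ : Fin L' → ℂ := fun a => Complex.exp ((-(2*π*(a:ℝ)/(L':ℝ)) : ℂ) * Complex.I) with hζ
  have hζnorm : ∀ a, ‖ζ a‖ = 1 := by
    intro a
    simp only [hζ]
    rw [Complex.norm_exp]
    norm_num
  -- max of ‖h.eval‖ over the arc γ(L')
  have hcont : ContinuousOn (fun θ : ℝ => ‖h.eval (Complex.exp ((θ:ℂ) * Complex.I))‖)
      (Set.Icc (-(π/L')) (π/L')) := by fun_prop
  obtain ⟨θ0, hθ0mem, hθ0max⟩ := isCompact_Icc.exists_isMaxOn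
    (Set.nonempty_Icc.mpr (neg_le_self (by positivity))) hcont
  set u0 : ℂ := Complex.exp ((θ0:ℂ) * Complex.I) with hu0
  set M : ℝ := ‖h.eval u0‖ with hM
  -- the auxiliary product F
  set F : ℂ → ℂ := fun u => ∏ a : Fin L', h.eval (u * ζ a) with hF
  have hdiff : Differentiable ℂ F := by
    apply Differentiable.fun_finsetProd
    intro a _
    exact (Polynomial.differentiable h).comp (differentiable_id.mul_const _)
  -- frontier bound
  have hfr : ∀ z : ℂ, ‖z‖ = 1 → ‖F z‖ ≤ M * ((n:ℝ)^d) ^ (L' - 1) := by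
    intro z hz
    obtain ⟨a, θa, hθa, heq⟩ := rot_lemma L' hL z hz
    have hzmem : ∀ b : Fin L', ‖z * ζ b‖ = 1 := by
      intro b; rw [norm_mul, hz, hζnorm, one_mul]
    have h1 : ‖F z‖ = ∏ b : Fin L', ‖h.eval (z * ζ b)‖ := by
      simp [hF, norm_prod]
    rw [h1, ← Finset.mul_prod_erase Finset.univ _ (Finset.mem_univ a)]
    have hfac : ‖h.eval (z * ζ a)‖ ≤ M := by
      rw [show z * ζ a = Complex.exp ((θa:ℂ) * Complex.I) from heq]
      exact hθ0max (Set.mem_Icc.mpr (abs_le.mp hθa))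
    have hrest : ∏ b ∈ Finset.univ.erase a, ‖h.eval (z * ζ b)‖ ≤ ((n:ℝ)^d) ^ (L' - 1) := by
      have := Finset.prod_le_prod (s := Finset.univ.erase a)
        (f := fun b => ‖h.eval (z * ζ b)‖) (g := fun _ => (n:ℝ)^d)
        (fun b _ => norm_nonneg _) (fun b _ => hsup _ (le_of_eq (hzmem b)))
      simpa [Finset.prod_const, Finset.card_erase_of_mem, Finset.card_univ] using this
    exact mul_le_mul hfac hrest (Finset.prod_nonneg fun b _ => norm_nonneg _)
      (le_trans (norm_nonneg _) hfac)
  -- maximum modulus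
  have hmax : ‖F 0‖ ≤ M * ((n:ℝ)^d) ^ (L' - 1) := by
    apply Complex.norm_le_of_forall_mem_frontier_norm_le
      (Metric.isBounded_ball (x := (0:ℂ)) (r := 1))
      (hdiff.diffContOnCl)
    · intro z hz
      rw [frontier_ball (0:ℂ) one_ne_zero] at hz
      exact hfr z (by simpa using hz)
    · rw [closure_ball (0:ℂ) one_ne_zero]
      simp
  have hF0 : ‖F 0‖ = ‖h.coeff 0‖ ^ L' := by
    simp only [hF, zero_mul]
    rw [norm_prod]
    simp [Polynomial.coeff_zero_eq_eval_zero, Finset.prod_const, Finset.card_univ]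
  -- put it together
  have hchain : Real.exp (-(B * Δ * Real.log n)) ^ L' ≤ M * ((n:ℝ)^d) ^ L' := by
    calc Real.exp (-(B * Δ * Real.log n)) ^ L' ≤ ‖h.coeff 0‖ ^ L' :=
          pow_le_pow_left₀ (Real.exp_nonneg _) hconst L'
      _ = ‖F 0‖ := hF0.symm
      _ ≤ M * ((n:ℝ)^d) ^ (L' - 1) := hmax
      _ ≤ M * ((n:ℝ)^d) ^ L' := by
          exact mul_le_mul_of_nonneg_left (pow_le_pow_right₀ hnd1 (Nat.sub_le _ _)) (norm_nonneg _)
  have hK : ((n:ℝ)^d) ^ L' = Real.exp (d * L' * Real.log n) := by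
    have hc : (↑d : ℝ) * ↑L' * Real.log n = ((d * L' : ℕ) : ℝ) * Real.log n := by
      push_cast; ring
    rw [← pow_mul, hc, ← Real.log_pow, Real.exp_log (by positivity)]
  have hKpos : (0:ℝ) < ((n:ℝ)^d) ^ L' := by positivity
  have h1 : Real.exp (-(B * Δ * Real.log n)) ^ L'
      = Real.exp (-1 * (B * Δ + d) * L' * Real.log n) * ((n:ℝ)^d) ^ L' := by
    rw [hK, ← Real.exp_nat_mul, ← Real.exp_add]
    congr 1; ring
  have hfinal : Real.exp (-1 * (B * Δ + d) * L' * Real.log n) ≤ M :=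
    le_of_mul_le_mul_right (by rw [← h1]; exact hchain) hKpos
  exact ⟨u0, ⟨θ0, abs_le.mpr ⟨hθ0mem.1, hθ0mem.2⟩, rfl⟩, hfinal⟩
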